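/- arXiv:2212.03949 — 2 statements merged into one kernel-verified Lean document; each statement's English description precedes it below -/
import Mathlib

section
/- Let P be a finite bounded poset with a generalized recursive atom ordering Σ. Then for any u < v in P and any root r for [u,v], the restriction of Σ to the rooted interval [u,v]_r is a generalized recursive atom ordering of the finite bounded poset [u,v]. -/
/-- `l` is a saturated chain from `x` to `y` in the poset `α`:
a list `x = x₀ ⋖ x₁ ⋖ ⋯ ⋖ x_k = y` of elements, each covered by the next. -/
def SatChain {α : Type*} [PartialOrder α] (x y : α) (l : List α) : Prop :=
  l.Chain' (· ⋖ ·) ∧ l.head? = some x ∧ l.getLast? = some y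

/-- A chain-atom ordering of a bounded poset `α`: for each `u : α` and each root `r`
(a saturated chain from `⊥` to `u`, recorded as a list ending in `u`), a strict linear
order on the atoms of the rooted interval `[u, ⊤]_r`, i.e. on the elements covering `u`.
The relation is recorded for all pairs `(u, r)`; only genuine roots are relevant. -/
structure ChainAtomOrdering (α : Type*) [PartialOrder α] where
  lt : α → List α → α → α → Prop
  irrefl : ∀ u r a, ¬ lt u r a a
  trans : ∀ u r a b c, lt u r a b → lt u r b c → lt u r a c
  total : ∀ u r a b, u ⋖ a → u ⋖ b → a ≠ b → lt u r a b ∨ lt u r b a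

/-- `a` is the first atom of the rooted interval `[u,v]_r` in the chain-atom ordering `S`. -/
def ChainAtomOrdering.IsFirstAtom {α : Type*} [PartialOrder α] (S : ChainAtomOrdering α)
    (u v : α) (r : List α) (a : α) : Prop :=
  u ⋖ a ∧ a ≤ v ∧ ∀ b, u ⋖ b → b ≤ v → b ≠ a → S.lt u r a b

/-- `IsGRAO S u v r`: the restriction of the chain-atom ordering `S` to the rooted
interval `[u,v]_r` is a generalized recursive atom ordering (GRAO) of `[u,v]`.
Either `[u,v]` has length 1, or: (i)(a) for each atom `a` of `[u,v]_r` the restriction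
to `[a,v]_{r·a}` is a GRAO; (i)(b) for each atom `a` and each `a ⋖ x ⋖ w ≤ v`, either
the first atom of `[a,w]_{r·a}` lies above some atom of `[u,v]_r` earlier than `a`, or
no atom of `[a,w]_{r·a}` does; (ii) if atoms `ai, aj` of `[u,v]_r` with `ai` earlier
than `aj` lie below a common `y ≤ v`, then some `z` with `aj ⋖ z ≤ y` lies above an
atom of `[u,v]_r` earlier than `aj`. -/
inductive IsGRAO {α : Type*} [PartialOrder α] (S : ChainAtomOrdering α) :
    α → α → List α → Prop
  | base (u v : α) (r : List α) (h : u ⋖ v) : IsGRAO S u v r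
  | step (u v : α) (r : List α)
      (ia : ∀ a, u ⋖ a → a ≤ v → IsGRAO S a v (r ++ [a]))
      (ib : ∀ a x w, u ⋖ a → a ≤ v → a ⋖ x → x ⋖ w → w ≤ v →
        (∃ b, S.IsFirstAtom a w (r ++ [a]) b ∧
          ∃ a', u ⋖ a' ∧ a' ≤ v ∧ S.lt u r a' a ∧ a' < b) ∨
        (∀ b a', a ⋖ b → b ≤ w → u ⋖ a' → a' ≤ v → S.lt u r a' a → ¬ a' < b))
      (ii : ∀ ai aj y, u ⋖ ai → ai ≤ v → u ⋖ aj → aj ≤ v → S.lt u r ai aj →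
        ai < y → aj < y → y ≤ v →
        ∃ ak z, u ⋖ ak ∧ ak ≤ v ∧ S.lt u r ak aj ∧ aj ⋖ z ∧ z ≤ y ∧ ak < z) :
      IsGRAO S u v r

/-- `IsRAO S u v r`: the restriction of the chain-atom ordering `S` to the rooted
interval `[u,v]_r` is a recursive atom ordering (RAO) of `[u,v]`.  It differs from a
GRAO only in condition (i)(b): for each atom `a` of `[u,v]_r`, every atom of
`[a,v]_{r·a}` lying above some atom of `[u,v]_r` earlier than `a` must precede every
atom of `[a,v]_{r·a}` lying above no such atom. -/
inductive IsRAO {α : Type*} [PartialOrder α] (S : ChainAtomOrdering α) :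
    α → α → List α → Prop
  | base (u v : α) (r : List α) (h : u ⋖ v) : IsRAO S u v r
  | step (u v : α) (r : List α)
      (ia : ∀ a, u ⋖ a → a ≤ v → IsRAO S a v (r ++ [a]))
      (ib : ∀ a b c, u ⋖ a → a ≤ v → a ⋖ b → b ≤ v → a ⋖ c → c ≤ v →
        (∃ a', u ⋖ a' ∧ a' ≤ v ∧ S.lt u r a' a ∧ a' < b) →
        (∀ a', u ⋖ a' → a' ≤ v → S.lt u r a' a → ¬ a' < c) →
        S.lt a (r ++ [a]) b c)
      (ii : ∀ ai aj y, u ⋖ ai → ai ≤ v → u ⋖ aj → aj ≤ v → S.lt u r ai aj →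
        ai < y → aj < y → y ≤ v →
        ∃ ak z, u ⋖ ak ∧ ak ≤ v ∧ S.lt u r ak aj ∧ aj ⋖ z ∧ z ≤ y ∧ ak < z) :
      IsRAO S u v r

lemma grao_self {α : Type*} [PartialOrder α] (S : ChainAtomOrdering α) (u : α)
    (r : List α) : IsGRAO S u u r := by
  refine IsGRAO.step u u r ?_ ?_ ?_
  · intro a ha hle; exact absurd (ha.lt.trans_le hle) (lt_irrefl u)
  · intro a x w ha hle _ _ _; exact absurd (ha.lt.trans_le hle) (lt_irrefl u)
  · intro ai aj y hai hle _ _ _ _ _ _; exact absurd (hai.lt.trans_le hle) (lt_irrefl u)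

lemma grao_atom {α : Type*} [PartialOrder α] {S : ChainAtomOrdering α} {u v : α}
    {r : List α} (h : IsGRAO S u v r) {a : α} (ha : u ⋖ a) (hav : a ≤ v) :
    IsGRAO S a v (r ++ [a]) := by
  cases h with
  | base _ _ _ hc =>
    have : a = v := hav.lt_or_eq.resolve_left (hc.2 ha.lt)
    subst this; exact grao_self S a (r ++ [a])
  | step _ _ _ ia _ _ => exact ia a ha hav

lemma grao_restrict {α : Type*} [PartialOrder α] {S : ChainAtomOrdering α} :
    ∀ {u w r}, IsGRAO S u w r → ∀ v, v ≤ w → IsGRAO S u v r := by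
  intro u w r h
  induction h with
  | base u w r hc =>
    intro v hvw
    rcases eq_or_lt_of_le hvw with rfl | hvw'
    · exact IsGRAO.base u v r hc
    · refine IsGRAO.step u v r ?_ ?_ ?_
      · intro a ha hav
        exact absurd (ha.lt.trans_le hav) (hc.2 · hvw')
      · intro a x wd ha hav _ _ _
        exact absurd (ha.lt.trans_le hav) (hc.2 · hvw')
      · intro ai aj y hai hav _ _ _ _ _ _
        exact absurd (hai.lt.trans_le hav) (hc.2 · hvw')
  | step u w r ia ib ii ih =>
    intro v hvw
    refine IsGRAO.step u v r ?_ ?_ ?_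
    · intro a ha hav
      exact ih a ha (hav.trans hvw) v hvw
    · intro a x wd ha hav hax hxw hwv
      rcases ib a x wd ha (hav.trans hvw) hax hxw (hwv.trans hvw) with
        ⟨b, hfirst, a', ha', _, hlt, hab⟩ | hright
      · exact Or.inl ⟨b, hfirst, a', ha', (hab.le.trans hfirst.2.1).trans hwv, hlt, hab⟩
      · exact Or.inr fun b a' h1 h2 h3 h4 h5 =>
          hright b a' h1 h2 h3 (h4.trans hvw) h5
    · intro ai aj y hai haiv haj hajv hlt h1 h2 hyv
      obtain ⟨ak, z, hak, _, hlt', hcov, hzy, hakz⟩ :=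
        ii ai aj y hai (haiv.trans hvw) haj (hajv.trans hvw) hlt h1 h2 (hyv.trans hvw)
      exact ⟨ak, z, hak, (hakz.le.trans hzy).trans hyv, hlt', hcov, hzy, hakz⟩

lemma grao_chain {α : Type*} [PartialOrder α] [OrderTop α] {S : ChainAtomOrdering α} :
    ∀ (l : List α) (r0 : List α) (u0 u : α),
    IsGRAO S u0 ⊤ r0 → l.Chain' (· ⋖ ·) → l.head? = some u0 → l.getLast? = some u →
    IsGRAO S u ⊤ (r0 ++ l.tail) := by
  intro l
  induction l with
  | nil => intro r0 u0 u _ _ hh _; simp at hh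
  | cons x l' ih =>
    intro r0 u0 u h hch hh hlast
    have hx : x = u0 := by simpa using hh
    subst hx
    cases l' with
    | nil =>
      have : u = x := by simpa using hlast.symm
      subst this; simpa using h
    | cons b l'' =>
      have hcov : x ⋖ b := (List.isChain_cons_cons.mp hch).1
      have hch' : (b :: l'').Chain' (· ⋖ ·) := (List.isChain_cons_cons.mp hch).2
      have h' : IsGRAO S b ⊤ (r0 ++ [b]) := grao_atom h hcov le_top
      have := ih (r0 ++ [b]) b u h' hch' rfl (by simpa using hlast)
      simpa [List.append_assoc] using this

/-- A generalized recursive atom ordering of a finite bounded poset restricts to a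
generalized recursive atom ordering of every rooted interval `[u,v]_r`. -/
theorem stmt_3 {α : Type*} [PartialOrder α] [BoundedOrder α] [Fintype α]
    (S : ChainAtomOrdering α) (h : IsGRAO S ⊥ ⊤ [⊥])
    (u v : α) (huv : u < v) (r : List α) (hr : SatChain (⊥ : α) u r) :
    IsGRAO S u v r := by
  obtain ⟨hch, hh, hlast⟩ := hr
  have htop : IsGRAO S u ⊤ ([⊥] ++ r.tail) := grao_chain r [⊥] ⊥ u h hch hh hlast
  have hr' : r = ⊥ :: r.tail := by
    cases r with
    | nil => simp at hh
    | cons x t => simpa using (by simpa using hh : x = ⊥) ▸ rfl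
  rw [show ([⊥] ++ r.tail : List α) = r by rw [hr']; rfl] at htop
  exact grao_restrict htop v le_top
end

section
/- Let P be a finite bounded poset with a generalized recursive atom ordering Σ. Then for any u < v in P and any root r for [u,v], the Σ-first atom of [u,v]_r is also the first atom of [u,v]_r in the chain-atom ordering obtained by applying the atom reordering process to Σ (with respect to any linear extension of P). -/
/-- `MemF S uminus rminus u v a`: the atom `a` of the rooted interval `[u,v]_{rminus·u}`
belongs to the set `F_r(u,v)`: `a` lies above some atom `u'` of `[uminus,v]_{rminus}`
that comes earlier than `u` in the `S`-order on the atoms of `[uminus,⊤]_{rminus}`. -/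
def MemF {α : Type*} [PartialOrder α] (S : ChainAtomOrdering α)
    (uminus : α) (rminus : List α) (u v a : α) : Prop :=
  u ⋖ a ∧ a ≤ v ∧ ∃ u', uminus ⋖ u' ∧ u' ≤ v ∧ S.lt uminus rminus u' u ∧ u' < a

/-- `MemG S uminus rminus u v a`: the atom `a` of `[u,v]_{rminus·u}` belongs
to `G_r(u,v)`, the complement of `F_r(u,v)` among the atoms of `[u,v]`. -/
def MemG {α : Type*} [PartialOrder α] (S : ChainAtomOrdering α)
    (uminus : α) (rminus : List α) (u v a : α) : Prop :=
  u ⋖ a ∧ a ≤ v ∧ ¬ MemF S uminus rminus u v a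

/-- `IsReorderingOn v Ω Γ`: the chain-atom ordering `Γ` (restricted to the interval
`[⊥,v]`) is the result of applying the atom reordering process to the restriction of
`Ω` to `[⊥,v]`.  This is the declarative characterization of the bottom-to-top
reordering procedure (for any linear extension): the order on the atoms of `[⊥,v]`
is unchanged, and for each `u ≠ ⊥` with root `rminus·u`, the elements of
`F_r(u,v)` (computed with respect to the already-reordered orders strictly below `u`,
i.e. with respect to `Γ`) precede those of `G_r(u,v)`, and the relative `Ω`-order
within `F_r(u,v)` and within `G_r(u,v)` is preserved. -/
def IsReorderingOn {α : Type*} [PartialOrder α] [OrderBot α] (v : α)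
    (Om Ga : ChainAtomOrdering α) : Prop :=
  (∀ a b, (⊥ : α) ⋖ a → a ≤ v → (⊥ : α) ⋖ b → b ≤ v →
    (Ga.lt ⊥ [⊥] a b ↔ Om.lt ⊥ [⊥] a b)) ∧
  (∀ (rminus : List α) (uminus u : α), SatChain (⊥ : α) uminus rminus → uminus ⋖ u →
    ∀ a b, u ⋖ a → a ≤ v → u ⋖ b → b ≤ v →
      (Ga.lt u (rminus ++ [u]) a b ↔
        (MemF Ga uminus rminus u v a ∧ ¬ MemF Ga uminus rminus u v b) ∨
        ((MemF Ga uminus rminus u v a ↔ MemF Ga uminus rminus u v b) ∧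
          Om.lt u (rminus ++ [u]) a b)))

/-- `Γ` is the result of applying the atom reordering process to `Ω` on all of `α`. -/
def IsReordering {α : Type*} [PartialOrder α] [BoundedOrder α]
    (Om Ga : ChainAtomOrdering α) : Prop :=
  IsReorderingOn (⊤ : α) Om Ga

section Aux

variable {α : Type*} [PartialOrder α]

lemma cao_asymm (S : ChainAtomOrdering α) {u : α} {r : List α} {a b : α}
    (h1 : S.lt u r a b) (h2 : S.lt u r b a) : False :=
  S.irrefl u r a (S.trans u r a b a h1 h2)

lemma satChain_le {x y : α} {l : List α} (h : SatChain x y l) : x ≤ y := by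
  induction l generalizing x with
  | nil => simp [SatChain] at h
  | cons a t ih =>
    obtain ⟨hc, hh, hl⟩ := h
    simp only [List.head?_cons, Option.some.injEq] at hh
    subst hh
    cases t with
    | nil =>
      simp only [List.getLast?_singleton, Option.some.injEq] at hl
      exact le_of_eq hl
    | cons b t' =>
      simp only [List.Chain', List.isChain_cons_cons] at hc
      have hbt : SatChain b y (b :: t') :=
        ⟨hc.2, rfl, by simpa [List.getLast?_cons_cons] using hl⟩
      exact hc.1.le.trans (ih hbt)

lemma satChain_bot_bot [OrderBot α] {l : List α} (h : SatChain (⊥ : α) ⊥ l) :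
    l = [⊥] := by
  obtain ⟨hc, hh, hl⟩ := h
  cases l with
  | nil => simp at hh
  | cons a t =>
    simp only [List.head?_cons, Option.some.injEq] at hh
    subst hh
    cases t with
    | nil => rfl
    | cons b t' =>
      simp only [List.Chain', List.isChain_cons_cons] at hc
      have hbt : SatChain b (⊥ : α) (b :: t') :=
        ⟨hc.2, rfl, by simpa [List.getLast?_cons_cons] using hl⟩
      have : b ≤ ⊥ := satChain_le hbt
      exact absurd (lt_of_lt_of_le hc.1.lt this) (lt_irrefl _)

lemma satChain_snoc [OrderBot α] {l : List α} {w u : α}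
    (h : SatChain (⊥ : α) w l) (hc : w ⋖ u) : SatChain (⊥ : α) u (l ++ [u]) := by
  obtain ⟨hch, hh, hl⟩ := h
  have hln : l ≠ [] := by rintro rfl; simp at hh
  refine ⟨List.isChain_append.mpr ⟨hch, List.isChain_singleton u, ?_⟩, ?_, ?_⟩
  · intro x hx y hy
    rw [hl, Option.mem_def, Option.some.injEq] at hx
    rw [List.head?_cons, Option.mem_def, Option.some.injEq] at hy
    subst hx; subst hy; exact hc
  · rw [List.head?_append_of_ne_nil _ hln, hh]
  · simp [List.getLast?_concat]

lemma satChain_decomp [OrderBot α] {l : List α} {u : α}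
    (h : SatChain (⊥ : α) u l) (hu : u ≠ ⊥) :
    ∃ lm um, l = lm ++ [u] ∧ SatChain (⊥ : α) um lm ∧ um ⋖ u := by
  obtain ⟨hch, hh, hl⟩ := h
  have hln : l ≠ [] := by rintro rfl; simp at hh
  have hgl : l.getLast hln = u := by
    have := List.getLast?_eq_getLast hln
    rw [hl] at this; exact (Option.some.injEq _ _ ▸ this.symm)
  have hdec : l.dropLast ++ [u] = l := by
    rw [← hgl]; exact List.dropLast_append_getLast hln
  have hlmn : l.dropLast ≠ [] := by
    intro hnil
    rw [← hdec, hnil, List.nil_append] at hh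
    simp only [List.head?_cons, Option.some.injEq] at hh
    exact hu hh
  refine ⟨l.dropLast, l.dropLast.getLast hlmn, hdec.symm, ⟨?_, ?_, ?_⟩, ?_⟩
  · have := hch
    rw [← hdec] at this
    exact (List.isChain_append.mp this).1
  · rw [← List.head?_append_of_ne_nil l.dropLast (l₂ := [u]) hlmn, hdec, hh]
  · exact (List.getLast?_eq_getLast hlmn)
  · have := hch
    rw [← hdec] at this
    have hlink := (List.isChain_append.mp this).2.2
    exact hlink _ (List.getLast?_eq_getLast hlmn) u rfl

lemma exists_min [Finite α] (S : ChainAtomOrdering α) (u : α) (r : List α)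
    (T : Set α) (hcov : ∀ x ∈ T, u ⋖ x) (hne : T.Nonempty) :
    ∃ m ∈ T, ∀ x ∈ T, x ≠ m → S.lt u r m x := by
  haveI : IsTrans α (S.lt u r) := ⟨fun a b c => S.trans u r a b c⟩
  haveI : IsIrrefl α (S.lt u r) := ⟨fun a => S.irrefl u r a⟩
  have wf : WellFounded (S.lt u r) := Finite.wellFounded_of_trans_of_irrefl _
  obtain ⟨m, hm, hmin⟩ := wf.has_min T hne
  exact ⟨m, hm, fun x hx hxm =>
    (S.total u r m x (hcov m hm) (hcov x hx) (Ne.symm hxm)).resolve_right (hmin x hx)⟩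

lemma exists_first_atom [Finite α] (S : ChainAtomOrdering α) (u v : α) (r : List α)
    (hne : ∃ z, u ⋖ z ∧ z ≤ v) : ∃ a, S.IsFirstAtom u v r a := by
  obtain ⟨m, hm, hmin⟩ := exists_min S u r {z | u ⋖ z ∧ z ≤ v}
    (fun x hx => hx.1) (by obtain ⟨z, h1, h2⟩ := hne; exact ⟨z, h1, h2⟩)
  exact ⟨m, hm.1, hm.2, fun b hb hbv hbm => hmin b ⟨hb, hbv⟩ hbm⟩

lemma grao_top [OrderTop α] (S : ChainAtomOrdering α) (r : List α) :
    IsGRAO S (⊤ : α) ⊤ r :=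
  IsGRAO.step _ _ _
    (fun a ha hle => absurd (ha.lt.trans_le hle) (lt_irrefl _))
    (fun a _ _ ha hle _ _ _ => absurd (ha.lt.trans_le hle) (lt_irrefl _))
    (fun ai _ _ hai hle _ _ _ _ _ _ => absurd (hai.lt.trans_le hle) (lt_irrefl _))

lemma grao_ii (S : ChainAtomOrdering α) {u v : α} {r : List α}
    (hg : IsGRAO S u v r) (hnc : ¬ u ⋖ v) :
    ∀ ai aj y, u ⋖ ai → ai ≤ v → u ⋖ aj → aj ≤ v → S.lt u r ai aj →
      ai < y → aj < y → y ≤ v →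
      ∃ ak z, u ⋖ ak ∧ ak ≤ v ∧ S.lt u r ak aj ∧ aj ⋖ z ∧ z ≤ y ∧ ak < z := by
  cases hg with
  | base _ _ _ hb => exact absurd hb hnc
  | step _ _ _ ia ib ii => exact ii

lemma grao_ib (S : ChainAtomOrdering α) {u v : α} {r : List α}
    (hg : IsGRAO S u v r) (hnc : ¬ u ⋖ v) :
    ∀ a x w, u ⋖ a → a ≤ v → a ⋖ x → x ⋖ w → w ≤ v →
      (∃ b, S.IsFirstAtom a w (r ++ [a]) b ∧
        ∃ a', u ⋖ a' ∧ a' ≤ v ∧ S.lt u r a' a ∧ a' < b) ∨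
      (∀ b a', a ⋖ b → b ≤ w → u ⋖ a' → a' ≤ v → S.lt u r a' a → ¬ a' < b) := by
  cases hg with
  | base _ _ _ hb => exact absurd hb hnc
  | step _ _ _ ia ib ii => exact ib

lemma grao_of_satChain [BoundedOrder α] (S : ChainAtomOrdering α)
    (h : IsGRAO S ⊥ ⊤ [⊥]) :
    ∀ n (l : List α) (u : α), l.length = n → SatChain (⊥ : α) u l →
      IsGRAO S u ⊤ l := by
  intro n
  induction n using Nat.strong_induction_on with
  | _ n ih =>
    intro l u hlen hsat
    by_cases hu : u = ⊥
    · subst hu; rw [satChain_bot_bot hsat]; exact h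
    · obtain ⟨lm, um, hdec, hsm, hcov⟩ := satChain_decomp hsat hu
      subst hdec
      have hg := ih lm.length (by simp at hlen; omega) lm um rfl hsm
      by_cases hT : u = ⊤
      · subst hT; exact grao_top S _
      · have huT : u < ⊤ := lt_of_le_of_ne le_top hT
        cases hg with
        | base _ _ _ hb => exact absurd huT (hb.2 hcov.lt)
        | step _ _ _ ia ib ii => exact ia u hcov le_top

/-- Key pure-`S` lemma: if some atom of `[u,v]` lies above an atom earlier than `u`,
then so does the `S`-first atom of `[u,v]`. -/
lemma first_atom_mem_F [BoundedOrder α] [Finite α] (S : ChainAtomOrdering α)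
    (h : IsGRAO S ⊥ ⊤ [⊥]) {rm : List α} {um u v a : α}
    (hrm : SatChain (⊥ : α) um rm) (hcov : um ⋖ u) (huv : u < v)
    (ha : S.IsFirstAtom u v (rm ++ [u]) a)
    (hF : ∃ b, u ⋖ b ∧ b ≤ v ∧ ∃ u', um ⋖ u' ∧ S.lt um rm u' u ∧ u' < b) :
    ∃ u'', um ⋖ u'' ∧ S.lt um rm u'' u ∧ u'' < a := by
  set r := rm ++ [u] with hr
  set T : Set α := {c | u ⋖ c ∧ c ≤ v ∧ ∃ u', um ⋖ u' ∧ S.lt um rm u' u ∧ u' < c}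
    with hT
  have hTne : T.Nonempty := by
    obtain ⟨b, hb1, hb2, hb3⟩ := hF; exact ⟨b, hb1, hb2, hb3⟩
  obtain ⟨b₀, hb₀T, hb₀min⟩ := exists_min S u r T (fun x hx => hx.1) hTne
  obtain ⟨hb₀cov, hb₀v, u'₀, hu'₀cov, hu'₀lt, hu'₀b⟩ := hb₀T
  by_cases hba : b₀ = a
  · exact ⟨u'₀, hu'₀cov, hu'₀lt, hba ▸ hu'₀b⟩
  exfalso
  have hab₀ : S.lt u r a b₀ := ha.2.2 b₀ hb₀cov hb₀v hba
  have hav : a < v := by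
    rcases lt_or_eq_of_le ha.2.1 with h' | h'
    · exact h'
    · exact absurd (lt_of_le_of_ne (hb₀v.trans h'.ge) hba) (ha.1.2 hb₀cov.lt)
  have hb₀lt : b₀ < v := by
    rcases lt_or_eq_of_le hb₀v with h' | h'
    · exact h'
    · exact absurd (lt_of_le_of_ne (ha.2.1.trans h'.ge) (fun e => hba e.symm))
        (hb₀cov.2 ha.1.lt)
  have hbT : b₀ < ⊤ := lt_of_lt_of_le hb₀lt le_top
  have hnuT : ¬ u ⋖ (⊤ : α) := fun hc => hc.2 hb₀cov.lt hbT
  have hnumT : ¬ um ⋖ (⊤ : α) := fun hc => hc.2 hcov.lt (lt_trans hb₀cov.lt hbT)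
  have hru : SatChain (⊥ : α) u r := satChain_snoc hrm hcov
  have ggu := grao_of_satChain S h r.length r u rfl hru
  have ggum := grao_of_satChain S h rm.length rm um rfl hrm
  obtain ⟨ak, z, hak_cov, -, hak_lt, hb₀z, hzv, hakz⟩ :=
    grao_ii S ggu hnuT a b₀ v ha.1 le_top hb₀cov le_top hab₀ hav hb₀lt le_top
  rcases grao_ib S ggum hnumT u b₀ z hcov le_top hb₀cov hb₀z le_top with
    ⟨c, hcf, u₃, hu₃cov, -, hu₃lt, hu₃c⟩ | hno
  · have hcT : c ∈ T := ⟨hcf.1, hcf.2.1.trans hzv, u₃, hu₃cov, hu₃lt, hu₃c⟩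
    have hcb : c ≠ b₀ := by
      rintro rfl
      have h1 : S.lt u r c ak :=
        hcf.2.2 ak hak_cov hakz.le (fun e => S.irrefl u r c (e ▸ hak_lt))
      exact cao_asymm S h1 hak_lt
    exact cao_asymm S (hb₀min c hcT hcb) (hcf.2.2 b₀ hb₀cov hb₀z.le (Ne.symm hcb))
  · exact hno b₀ u'₀ hb₀cov hb₀z.le hu'₀cov le_top hu'₀lt hu'₀b

/-- The `F`-sets computed with respect to the reordering `S'` agree with those
computed with respect to `S`. -/
lemma memF_iff [BoundedOrder α] [Finite α] (S S' : ChainAtomOrdering α)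
    (h : IsGRAO S ⊥ ⊤ [⊥]) (hre : IsReordering S S') :
    ∀ n (l : List α) (u : α), l.length = n → SatChain (⊥ : α) u l →
      ∀ y c, u ⋖ y → y ⋖ c →
        ((∃ x, u ⋖ x ∧ S'.lt u l x y ∧ x < c) ↔
          (∃ x, u ⋖ x ∧ S.lt u l x y ∧ x < c)) := by
  intro n
  induction n using Nat.strong_induction_on with
  | _ n ih =>
    intro l u hlen hsat y c hy hc
    by_cases hu : u = ⊥
    · subst hu
      have hlb := satChain_bot_bot hsat
      subst hlb
      constructor
      · rintro ⟨x, hx, hx', hxc⟩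
        exact ⟨x, hx, (hre.1 x y hx le_top hy le_top).mp hx', hxc⟩
      · rintro ⟨x, hx, hx', hxc⟩
        exact ⟨x, hx, (hre.1 x y hx le_top hy le_top).mpr hx', hxc⟩
    · obtain ⟨lm, um, hdec, hsm, hcov⟩ := satChain_decomp hsat hu
      subst hdec
      have IH := ih lm.length (by simp at hlen; omega) lm um rfl hsm
      have hFiff : ∀ x, u ⋖ x →
          (MemF S' um lm u ⊤ x ↔ ∃ u', um ⋖ u' ∧ S.lt um lm u' u ∧ u' < x) := by
        intro x hx
        constructor
        · rintro ⟨-, -, u', h1, -, h3, h4⟩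
          exact (IH u x hcov hx).mp ⟨u', h1, h3, h4⟩
        · intro hx'
          obtain ⟨u', h1, h3, h4⟩ := (IH u x hcov hx).mpr hx'
          exact ⟨hx, le_top, u', h1, le_top, h3, h4⟩
      set F : α → Prop := fun x => ∃ u', um ⋖ u' ∧ S.lt um lm u' u ∧ u' < x with hFdef
      have hreq : ∀ x y', u ⋖ x → u ⋖ y' →
          (S'.lt u (lm ++ [u]) x y' ↔
            (F x ∧ ¬ F y') ∨ ((F x ↔ F y') ∧ S.lt u (lm ++ [u]) x y')) := by
        intro x y' hx hy'
        rw [hre.2 lm um u hsm hcov x y' hx le_top hy' le_top]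
        constructor
        · rintro (⟨h1, h2⟩ | ⟨h1, h2⟩)
          · exact Or.inl ⟨(hFiff x hx).mp h1, fun hf => h2 ((hFiff y' hy').mpr hf)⟩
          · exact Or.inr ⟨((hFiff x hx).symm.trans (h1.trans (hFiff y' hy'))), h2⟩
        · rintro (⟨h1, h2⟩ | ⟨h1, h2⟩)
          · exact Or.inl ⟨(hFiff x hx).mpr h1, fun hf => h2 ((hFiff y' hy').mp hf)⟩
          · exact Or.inr ⟨((hFiff x hx).trans (h1.trans (hFiff y' hy').symm)), h2⟩
      have hucnew : u < c := hy.lt.trans hc.lt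
      constructor
      · rintro ⟨x, hx, hx', hxc⟩
        rcases (hreq x y hx hy).mp hx' with ⟨h1, h2⟩ | ⟨h1, h2⟩
        · obtain ⟨a₀, ha₀⟩ := exists_first_atom S u c (lm ++ [u]) ⟨y, hy, hc.le⟩
          have ha₀F : F a₀ := by
            obtain ⟨u', p1, p2, p3⟩ := h1
            obtain ⟨u'', q1, q2, q3⟩ := first_atom_mem_F S h hsm hcov hucnew ha₀
              ⟨x, hx, hxc.le, u', p1, p2, p3⟩
            exact ⟨u'', q1, q2, q3⟩
          have ha₀y : a₀ ≠ y := fun e => h2 (e ▸ ha₀F)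
          have hlt : S.lt u (lm ++ [u]) a₀ y := ha₀.2.2 y hy hc.le (Ne.symm ha₀y)
          have ha₀c : a₀ < c :=
            lt_of_le_of_ne ha₀.2.1 (fun e => (e ▸ ha₀.1).2 hy.lt hc.lt)
          exact ⟨a₀, ha₀.1, hlt, ha₀c⟩
        · exact ⟨x, hx, h2, hxc⟩
      · rintro ⟨x, hx, hx', hxc⟩
        by_cases hFy : F y
        · by_cases hFx : F x
          · exact ⟨x, hx, (hreq x y hx hy).mpr (Or.inr ⟨iff_of_true hFx hFy, hx'⟩), hxc⟩
          · obtain ⟨a₀, ha₀⟩ := exists_first_atom S u c (lm ++ [u]) ⟨y, hy, hc.le⟩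
            have ha₀F : F a₀ := by
              obtain ⟨u', p1, p2, p3⟩ := hFy
              obtain ⟨u'', q1, q2, q3⟩ := first_atom_mem_F S h hsm hcov hucnew ha₀
                ⟨y, hy, hc.le, u', p1, p2, p3⟩
              exact ⟨u'', q1, q2, q3⟩
            have ha₀y : a₀ ≠ y := by
              rintro rfl
              exact cao_asymm S
                (ha₀.2.2 x hx hxc.le (fun e => S.irrefl _ _ _ (e ▸ hx'))) hx'
            have hlt : S.lt u (lm ++ [u]) a₀ y := ha₀.2.2 y hy hc.le (Ne.symm ha₀y)
            have ha₀c : a₀ < c :=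
              lt_of_le_of_ne ha₀.2.1 (fun e => (e ▸ ha₀.1).2 hy.lt hc.lt)
            exact ⟨a₀, ha₀.1,
              (hreq a₀ y ha₀.1 hy).mpr (Or.inr ⟨iff_of_true ha₀F hFy, hlt⟩), ha₀c⟩
        · by_cases hFx : F x
          · exact ⟨x, hx, (hreq x y hx hy).mpr (Or.inl ⟨hFx, hFy⟩), hxc⟩
          · exact ⟨x, hx,
              (hreq x y hx hy).mpr (Or.inr ⟨iff_of_false hFx hFy, hx'⟩), hxc⟩

end Aux

/-- For a GRAO `S` of a finite bounded poset: for any `u < v` and any root `r` for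
`[u,v]`, the `S`-first atom of `[u,v]_r` remains the first atom of `[u,v]_r` after
applying the atom reordering process (for any linear extension; the result is
characterized by `IsReordering`). -/
theorem stmt_9 {α : Type*} [PartialOrder α] [BoundedOrder α] [Fintype α]
    (S : ChainAtomOrdering α) (h : IsGRAO S ⊥ ⊤ [⊥])
    (S' : ChainAtomOrdering α) (hre : IsReordering S S')
    (u v : α) (huv : u < v) (r : List α) (hr : SatChain (⊥ : α) u r)
    (a : α) (ha : S.IsFirstAtom u v r a) :
    S'.IsFirstAtom u v r a := by
  obtain ⟨hacov, hav, hafirst⟩ := ha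
  by_cases hu : u = ⊥
  · subst hu
    have hrb : r = [⊥] := satChain_bot_bot hr
    subst hrb
    exact ⟨hacov, hav, fun b hb hbv hne =>
      (hre.1 a b hacov le_top hb le_top).mpr (hafirst b hb hbv hne)⟩
  · obtain ⟨lm, um, hdec, hsm, hcov⟩ := satChain_decomp hr hu
    subst hdec
    have IH := memF_iff S S' h hre lm.length lm um rfl hsm
    have hFiff : ∀ x, u ⋖ x →
        (MemF S' um lm u ⊤ x ↔ ∃ u', um ⋖ u' ∧ S.lt um lm u' u ∧ u' < x) := by
      intro x hx
      constructor
      · rintro ⟨-, -, u', h1, -, h3, h4⟩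
        exact (IH u x hcov hx).mp ⟨u', h1, h3, h4⟩
      · intro hx'
        obtain ⟨u', h1, h3, h4⟩ := (IH u x hcov hx).mpr hx'
        exact ⟨hx, le_top, u', h1, le_top, h3, h4⟩
    refine ⟨hacov, hav, fun b hb hbv hne => ?_⟩
    have hS : S.lt u (lm ++ [u]) a b := hafirst b hb hbv hne
    rw [hre.2 lm um u hsm hcov a b hacov le_top hb le_top]
    by_cases hFb : ∃ u', um ⋖ u' ∧ S.lt um lm u' u ∧ u' < b
    · have hFa : ∃ u', um ⋖ u' ∧ S.lt um lm u' u ∧ u' < a := by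
        obtain ⟨u', p1, p2, p3⟩ := hFb
        obtain ⟨u'', q1, q2, q3⟩ := first_atom_mem_F S h hsm hcov huv
          ⟨hacov, hav, hafirst⟩ ⟨b, hb, hbv, u', p1, p2, p3⟩
        exact ⟨u'', q1, q2, q3⟩
      exact Or.inr ⟨iff_of_true ((hFiff a hacov).mpr hFa) ((hFiff b hb).mpr hFb), hS⟩
    · by_cases hFa : ∃ u', um ⋖ u' ∧ S.lt um lm u' u ∧ u' < a
      · exact Or.inl ⟨(hFiff a hacov).mpr hFa, fun m => hFb ((hFiff b hb).mp m)⟩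
      · exact Or.inr ⟨iff_of_false (fun m => hFa ((hFiff a hacov).mp m))
          (fun m => hFb ((hFiff b hb).mp m)), hS⟩
end
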